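/- Given a tour tree with fixed directions and the schedule in which each non-root robot starts at the meeting point with its parent immediately after meeting it and traverses its tour without intermediate stops, the worst delay of data from a subtree rooted at v, computed recursively as max{min_d (l_v − l_v^d(p_v^start, d)), max over children w of (M_w + time_v(p_v^meet(w), p_v^meet(parent), d_v))}, where d_v is chosen to minimize the latter maximum, equals the minimum worst delay achievable over all direction assignments on that subtree. -/

import Mathlib

/-!
STATEMENT 7: Given a tour tree with fixed meeting points and the schedule in which
each non-root robot starts at the meeting point with its parent immediately after
meeting it and traverses its tour without intermediate stops, the worst delay of data
from a subtree rooted at v, computed recursively as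
  max{ min_d (l_v − l_v^d(p_v^start, d)),
       max over children w of (M_w + time_v(p_v^meet(w), p_v^meet(parent), d_v)) },
where d_v is chosen to minimize the latter maximum, equals the minimum worst delay
achievable over all direction assignments on that subtree.

Model: the rooted tour tree is a parent map on `Fin n` with depths decreasing towards
the root.  `own v` = min_d (l_v − l_v^d(p_v^start, d)) is the (direction-independent)
worst delay of v's own freshest data; `t v w d` is the travel time on tour v from the
meeting point with child w to the meeting point with v's parent in direction d.
For a direction assignment σ, `M σ v` is the worst delay of the subtree rooted at v,
and `opt v` is the value computed by the greedy bottom-up direction choice.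
The claim: `opt v` equals the minimum of `M σ v` over all direction assignments σ.
-/
theorem stmt_7
    (n : ℕ) (parent : Fin n → Fin n) (root : Fin n)
    (hroot : parent root = root)
    (dep : Fin n → ℕ) (hdep : ∀ w, w ≠ root → dep (parent w) < dep w)
    (own : Fin n → ℝ)
    (t : Fin n → Fin n → Bool → ℝ)
    (ht : ∀ v w d, 0 ≤ t v w d)
    (M : (Fin n → Bool) → Fin n → ℝ)
    (hM : ∀ σ v, M σ v = sSup (insert (own v)
      {x : ℝ | ∃ w, parent w = v ∧ w ≠ v ∧ x = M σ w + t v w (σ v)}))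
    (opt : Fin n → ℝ)
    (hopt : ∀ v, opt v = ⨅ d : Bool, sSup (insert (own v)
      {x : ℝ | ∃ w, parent w = v ∧ w ≠ v ∧ x = opt w + t v w d})) :
    ∀ v, opt v = ⨅ σ : Fin n → Bool, M σ v := by
  -- the set appearing in the recursions
  set S : (Fin n → ℝ) → Fin n → Bool → Set ℝ :=
    fun f v d => insert (own v) {x : ℝ | ∃ w, parent w = v ∧ w ≠ v ∧ x = f w + t v w d}
    with hS
  have hSeq : ∀ f v d, S f v d =
      insert (own v) ((fun w => f w + t v w d) '' {w | parent w = v ∧ w ≠ v}) := by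
    intro f v d
    rw [hS]
    ext x
    simp only [Set.mem_insert_iff, Set.mem_setOf_eq, Set.mem_image]
    constructor
    · rintro (rfl | ⟨w, h1, h2, h3⟩)
      · exact Or.inl rfl
      · exact Or.inr ⟨w, ⟨h1, h2⟩, h3.symm⟩
    · rintro (rfl | ⟨w, ⟨h1, h2⟩, h3⟩)
      · exact Or.inl rfl
      · exact Or.inr ⟨w, h1, h2, h3.symm⟩
  have hfin : ∀ f v d, (S f v d).Finite := by
    intro f v d
    rw [hSeq]
    exact ((Set.toFinite _).image _).insert _
  have hbdd : ∀ f v d, BddAbove (S f v d) := fun f v d => (hfin f v d).bddAbove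
  have hne : ∀ f v d, (S f v d).Nonempty := fun f v d => ⟨own v, Set.mem_insert _ _⟩
  have hmem : ∀ f v d w, parent w = v → w ≠ v → f w + t v w d ∈ S f v d := by
    intro f v d w h1 h2
    exact Set.mem_insert_iff.mpr (Or.inr ⟨w, h1, h2, rfl⟩)
  have hmono : ∀ (f g : Fin n → ℝ) v d, (∀ w, parent w = v → w ≠ v → f w ≤ g w) →
      sSup (S f v d) ≤ sSup (S g v d) := by
    intro f g v d h
    apply csSup_le (hne f v d)
    rintro x (rfl | ⟨w, h1, h2, rfl⟩)
    · exact le_csSup (hbdd g v d) (Set.mem_insert _ _)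
    · exact le_trans (add_le_add_left (h w h1 h2) _)
        (le_csSup (hbdd g v d) (hmem g v d w h1 h2))
  -- children are deeper
  set card : Fin n → ℕ := fun v => (Finset.univ.filter fun w => dep v < dep w).card
    with hcard
  have hchild : ∀ v w : Fin n, parent w = v → w ≠ v → card w < card v := by
    intro v w hp hw
    have hwr : w ≠ root := by
      intro h; subst h
      rw [hroot] at hp
      exact hw hp
    have hlt : dep v < dep w := by rw [← hp]; exact hdep w hwr
    apply Finset.card_lt_card
    have hsub : (Finset.univ.filter fun u => dep w < dep u) ⊆
        (Finset.univ.filter fun u => dep v < dep u) := by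
      intro u hu
      simp only [Finset.mem_filter, Finset.mem_univ, true_and] at hu ⊢
      exact lt_trans hlt hu
    exact (Finset.ssubset_iff_of_subset hsub).mpr ⟨w, by simp [hlt], by simp⟩
  -- rewrite hM and hopt in terms of S
  have hM' : ∀ σ v, M σ v = sSup (S (M σ) v (σ v)) := hM
  have hopt' : ∀ v, opt v = ⨅ d : Bool, sSup (S opt v d) := hopt
  have hbddB : ∀ (g : Bool → ℝ), BddBelow (Set.range g) :=
    fun g => (Set.finite_range g).bddBelow
  -- part A : opt v ≤ M σ v for every σ
  have A : ∀ k, ∀ v : Fin n, card v ≤ k → ∀ σ, opt v ≤ M σ v := by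
    intro k
    induction k with
    | zero =>
      intro v hv σ
      rw [hopt' v, hM' σ v]
      refine le_trans (ciInf_le (hbddB _) (σ v)) (hmono _ _ v (σ v) ?_)
      intro w h1 h2
      exact absurd (hchild v w h1 h2) (by omega)
    | succ k ih =>
      intro v hv σ
      rw [hopt' v, hM' σ v]
      refine le_trans (ciInf_le (hbddB _) (σ v)) (hmono _ _ v (σ v) ?_)
      intro w h1 h2
      exact ih w (by have := hchild v w h1 h2; omega) σ
  -- the greedy assignment
  set σs : Fin n → Bool :=
    fun v => if sSup (S opt v false) ≤ sSup (S opt v true) then false else true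
    with hσs
  have hgreedy : ∀ v d, sSup (S opt v (σs v)) ≤ sSup (S opt v d) := by
    intro v d
    by_cases h : sSup (S opt v false) ≤ sSup (S opt v true)
    · have hv : σs v = false := by rw [hσs]; simp [h]
      rw [hv]; cases d
      · exact le_rfl
      · exact h
    · have hv : σs v = true := by rw [hσs]; simp [h]
      rw [hv]; cases d
      · exact le_of_not_ge h
      · exact le_rfl
  -- part B : M σs v ≤ opt v
  have B : ∀ k, ∀ v : Fin n, card v ≤ k → M σs v ≤ opt v := by
    intro k
    induction k with
    | zero =>
      intro v hv
      rw [hopt' v, hM' σs v]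
      refine le_trans (hmono _ _ v (σs v) ?_) (le_ciInf (hgreedy v))
      intro w h1 h2
      exact absurd (hchild v w h1 h2) (by omega)
    | succ k ih =>
      intro v hv
      rw [hopt' v, hM' σs v]
      refine le_trans (hmono _ _ v (σs v) ?_) (le_ciInf (hgreedy v))
      intro w h1 h2
      exact ih w (by have := hchild v w h1 h2; omega)
  intro v
  refine le_antisymm (le_ciInf fun σ => A (card v) v le_rfl σ) ?_
  exact le_trans (ciInf_le ((Set.finite_range _).bddBelow) σs) (B (card v) v le_rfl)
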